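/- arXiv:1810.09080 — 4 statements merged into one kernel-verified Lean document; each statement's English description precedes it below -/
import Mathlib

section
/- Let w_j, w_k, w_l, w_m, m_α, m_β be nonzero complex numbers and set A = w_m/(m_β·w_j), B = w_k/(m_α·w_j), C = (w_j·w_l)/(w_m·w_k). Assume ‖A‖ < 1, ‖B‖ < 1, ‖C‖ < 1, and that neither A nor B is a nonpositive real number. Define f : ℂ → ℂ by f(w) = Li₂(w_m/(m_β·w)) + Li₂(w_k/(m_α·w)) − Li₂(w_l/(m_β·w_k)) − Li₂(w_l/(m_α·w_m)) + Li₂((w·w_l)/(w_m·w_k)) − π²/6 + log(w_m/(m_β·w))·log(w_k/(m_α·w)). Then f has derivative D at w_j, where D = (1/w_j)·(log(1−A) + log(1−B) − log(1−C) − log A − log B), and moreover exp(w_j·D) = ((m_α·w_j − w_k)·(m_β·w_j − w_m))/(w_k·w_m − w_j·w_l). -/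
/-- The dilogarithm, defined by the power series `Li₂(z) = ∑_{n ≥ 1} zⁿ / n²`. -/
noncomputable def Li2 (z : ℂ) : ℂ := ∑' n : ℕ, z ^ (n + 1) / ((n : ℂ) + 1) ^ 2

lemma Li2_hasSum_deriv {z : ℂ} (hz : ‖z‖ < 1) (hz0 : z ≠ 0) :
    HasSum (fun n : ℕ => z ^ n / ((n : ℂ) + 1)) (-Complex.log (1 - z) / z) := by
  have h := Complex.hasSum_taylorSeries_neg_log hz
  have h1 : HasSum (fun n : ℕ => z ^ (n + 1) / ((n : ℂ) + 1)) (-Complex.log (1 - z)) := by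
    have h2 := (hasSum_nat_add_iff' (f := fun n : ℕ => z ^ n / (n : ℂ)) 1).mpr h
    simpa using h2
  have h2 := h1.mul_left z⁻¹
  have heq : (fun n : ℕ => z⁻¹ * (z ^ (n + 1) / ((n : ℂ) + 1)))
      = fun n : ℕ => z ^ n / ((n : ℂ) + 1) := by
    funext n
    rw [pow_succ]
    field_simp
  rw [heq] at h2
  rw [show -Complex.log (1 - z) / z = z⁻¹ * -Complex.log (1 - z) from div_eq_inv_mul _ _]
  exact h2

lemma Li2_hasDerivAt {z : ℂ} (hz : ‖z‖ < 1) (hz0 : z ≠ 0) :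
    HasDerivAt Li2 (-Complex.log (1 - z) / z) z := by
  set r : ℝ := (1 + ‖z‖) / 2 with hrdef
  have hzr : ‖z‖ < r := by simp only [hrdef]; linarith [norm_nonneg z]
  have hr1 : r < 1 := by simp only [hrdef]; linarith
  have hr0 : (0 : ℝ) ≤ r := by positivity
  have key : HasDerivAt (fun w : ℂ => ∑' n : ℕ, w ^ (n + 1) / ((n : ℂ) + 1) ^ 2)
      (∑' n : ℕ, z ^ n / ((n : ℂ) + 1)) z := by
    apply hasDerivAt_tsum_of_isPreconnected (u := fun n : ℕ => r ^ n)
        (g := fun (n : ℕ) (w : ℂ) => w ^ (n + 1) / ((n : ℂ) + 1) ^ 2)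
        (g' := fun (n : ℕ) (w : ℂ) => w ^ n / ((n : ℂ) + 1)) (y₀ := 0)
        (summable_geometric_of_lt_one hr0 hr1) Metric.isOpen_ball
        ((convex_ball (0:ℂ) r).isPreconnected)
    · intro n w hw
      have hpow : HasDerivAt (fun w : ℂ => w ^ (n + 1) / ((n : ℂ) + 1) ^ 2) _ w :=
        (hasDerivAt_pow (n + 1) w).div_const (((n : ℂ) + 1) ^ 2)
      have hn : ((n : ℂ) + 1) ≠ 0 := Nat.cast_add_one_ne_zero n
      refine hpow.congr_deriv ?_
      push_cast
      rw [div_eq_div_iff (pow_ne_zero 2 hn) hn]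
      ring
    · intro n w hw
      have hw' : ‖w‖ ≤ r := by
        have := mem_ball_zero_iff.mp hw
        linarith
      calc ‖w ^ n / ((n : ℂ) + 1)‖ = ‖w‖ ^ n / ‖(n : ℂ) + 1‖ := by
            rw [norm_div, norm_pow]
        _ ≤ ‖w‖ ^ n := by
            apply div_le_self (by positivity)
            have : ((n : ℂ) + 1) = ((n + 1 : ℕ) : ℂ) := by push_cast; ring
            rw [this, Complex.norm_natCast]
            exact_mod_cast Nat.one_le_iff_ne_zero.mpr (Nat.succ_ne_zero n)
        _ ≤ r ^ n := pow_le_pow_left₀ (norm_nonneg w) hw' n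
    · exact mem_ball_zero_iff.mpr (by simpa using lt_of_le_of_lt (norm_nonneg z) hzr)
    · apply summable_of_ne_finset_zero (s := ∅)
      intro n _
      simp
    · exact mem_ball_zero_iff.mpr hzr
  have htsum : (∑' n : ℕ, z ^ n / ((n : ℂ) + 1)) = -Complex.log (1 - z) / z :=
    (Li2_hasSum_deriv hz hz0).tsum_eq
  rw [htsum] at key
  exact key

/-- The crossing potential of a positive crossing, viewed as a function of the
region variable `w_j`, has derivative `D` at `w_j`, and `exp (w_j * D) = τ_{c,j}`. -/
theorem crossing_potential_deriv_wj_pos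
    (wj wk wl wm mα mβ : ℂ)
    (hwj : wj ≠ 0) (hwk : wk ≠ 0) (hwl : wl ≠ 0) (hwm : wm ≠ 0)
    (hmα : mα ≠ 0) (hmβ : mβ ≠ 0)
    (A B C D : ℂ)
    (hA : A = wm / (mβ * wj)) (hB : B = wk / (mα * wj))
    (hC : C = (wj * wl) / (wm * wk))
    (hAnorm : ‖A‖ < 1) (hBnorm : ‖B‖ < 1) (hCnorm : ‖C‖ < 1)
    (hAreal : ∀ r : ℝ, r ≤ 0 → (r : ℂ) ≠ A)
    (hBreal : ∀ r : ℝ, r ≤ 0 → (r : ℂ) ≠ B)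
    (hD : D = (1 / wj) * (Complex.log (1 - A) + Complex.log (1 - B) - Complex.log (1 - C)
      - Complex.log A - Complex.log B)) :
    HasDerivAt (fun w : ℂ =>
      Li2 (wm / (mβ * w)) + Li2 (wk / (mα * w)) - Li2 (wl / (mβ * wk)) - Li2 (wl / (mα * wm))
        + Li2 ((w * wl) / (wm * wk)) - (Real.pi : ℂ) ^ 2 / 6
        + Complex.log (wm / (mβ * w)) * Complex.log (wk / (mα * w))) D wj ∧
    Complex.exp (wj * D) = ((mα * wj - wk) * (mβ * wj - wm)) / (wk * wm - wj * wl) := by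
  have hA0 : A ≠ 0 := by rw [hA]; exact div_ne_zero hwm (mul_ne_zero hmβ hwj)
  have hB0 : B ≠ 0 := by rw [hB]; exact div_ne_zero hwk (mul_ne_zero hmα hwj)
  have hC0 : C ≠ 0 := by
    rw [hC]; exact div_ne_zero (mul_ne_zero hwj hwl) (mul_ne_zero hwm hwk)
  have h1A : (1 : ℂ) - A ≠ 0 := by
    intro h
    have : A = 1 := by linear_combination -h
    rw [this] at hAnorm; simp at hAnorm
  have h1B : (1 : ℂ) - B ≠ 0 := by
    intro h
    have : B = 1 := by linear_combination -h
    rw [this] at hBnorm; simp at hBnorm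
  have h1C : (1 : ℂ) - C ≠ 0 := by
    intro h
    have : C = 1 := by linear_combination -h
    rw [this] at hCnorm; simp at hCnorm
  have hAslit : A ∈ Complex.slitPlane := by
    rw [Complex.mem_slitPlane_iff]
    by_contra h
    push_neg at h
    obtain ⟨h1, h2⟩ := h
    exact hAreal A.re h1 (by rw [← Complex.re_add_im A, h2]; simp)
  have hBslit : B ∈ Complex.slitPlane := by
    rw [Complex.mem_slitPlane_iff]
    by_contra h
    push_neg at h
    obtain ⟨h1, h2⟩ := h
    exact hBreal B.re h1 (by rw [← Complex.re_add_im B, h2]; simp)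
  have hgA : HasDerivAt (fun w : ℂ => wm / (mβ * w)) (wm / mβ * -(wj ^ 2)⁻¹) wj := by
    have h := (hasDerivAt_inv hwj).const_mul (wm / mβ)
    rw [show (fun w : ℂ => wm / (mβ * w)) = fun w => wm / mβ * w⁻¹ from
      funext fun w => by rw [div_mul_eq_div_div, div_eq_mul_inv]]
    exact h
  have hgB : HasDerivAt (fun w : ℂ => wk / (mα * w)) (wk / mα * -(wj ^ 2)⁻¹) wj := by
    have h := (hasDerivAt_inv hwj).const_mul (wk / mα)
    rw [show (fun w : ℂ => wk / (mα * w)) = fun w => wk / mα * w⁻¹ from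
      funext fun w => by rw [div_mul_eq_div_div, div_eq_mul_inv]]
    exact h
  have hgC : HasDerivAt (fun w : ℂ => w * wl / (wm * wk)) (wl / (wm * wk)) wj := by
    simpa [mul_div_assoc] using (hasDerivAt_id wj).mul_const (wl / (wm * wk))
  have hLA : HasDerivAt (fun w : ℂ => Li2 (wm / (mβ * w)))
      (-Complex.log (1 - A) / A * (wm / mβ * -(wj ^ 2)⁻¹)) wj := by
    have h := (Li2_hasDerivAt (z := wm / (mβ * wj)) (hA ▸ hAnorm) (hA ▸ hA0)).comp wj hgA
    rw [← hA] at h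
    exact h
  have hLB : HasDerivAt (fun w : ℂ => Li2 (wk / (mα * w)))
      (-Complex.log (1 - B) / B * (wk / mα * -(wj ^ 2)⁻¹)) wj := by
    have h := (Li2_hasDerivAt (z := wk / (mα * wj)) (hB ▸ hBnorm) (hB ▸ hB0)).comp wj hgB
    rw [← hB] at h
    exact h
  have hLC : HasDerivAt (fun w : ℂ => Li2 (w * wl / (wm * wk)))
      (-Complex.log (1 - C) / C * (wl / (wm * wk))) wj := by
    have h := (Li2_hasDerivAt (z := wj * wl / (wm * wk)) (hC ▸ hCnorm) (hC ▸ hC0)).comp wj hgC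
    rw [← hC] at h
    exact h
  have hlogA : HasDerivAt (fun w : ℂ => Complex.log (wm / (mβ * w)))
      (A⁻¹ * (wm / mβ * -(wj ^ 2)⁻¹)) wj := by
    have h := (Complex.hasDerivAt_log (hA ▸ hAslit)).comp wj hgA
    rw [← hA] at h
    exact h
  have hlogB : HasDerivAt (fun w : ℂ => Complex.log (wk / (mα * w)))
      (B⁻¹ * (wk / mα * -(wj ^ 2)⁻¹)) wj := by
    have h := (Complex.hasDerivAt_log (hB ▸ hBslit)).comp wj hgB
    rw [← hB] at h
    exact h
  have hmain : HasDerivAt (fun w : ℂ =>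
      Li2 (wm / (mβ * w)) + Li2 (wk / (mα * w)) - Li2 (wl / (mβ * wk)) - Li2 (wl / (mα * wm))
        + Li2 ((w * wl) / (wm * wk)) - (Real.pi : ℂ) ^ 2 / 6
        + Complex.log (wm / (mβ * w)) * Complex.log (wk / (mα * w)))
      (-Complex.log (1 - A) / A * (wm / mβ * -(wj ^ 2)⁻¹)
        + -Complex.log (1 - B) / B * (wk / mα * -(wj ^ 2)⁻¹)
        + -Complex.log (1 - C) / C * (wl / (wm * wk))
        + (A⁻¹ * (wm / mβ * -(wj ^ 2)⁻¹) * Complex.log (wk / (mα * wj))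
          + Complex.log (wm / (mβ * wj)) * (B⁻¹ * (wk / mα * -(wj ^ 2)⁻¹)))) wj := by
    exact ((((((hLA.add hLB).sub_const _).sub_const _).add hLC).sub_const _).add
      (hlogA.mul hlogB))
  constructor
  · convert hmain using 1
    have e1 : -Complex.log (1 - A) / A * (wm / mβ * -(wj ^ 2)⁻¹)
        = Complex.log (1 - A) / wj := by
      rw [hA]; field_simp
    have e2 : -Complex.log (1 - B) / B * (wk / mα * -(wj ^ 2)⁻¹)
        = Complex.log (1 - B) / wj := by
      rw [hB]; field_simp
    have e3 : -Complex.log (1 - C) / C * (wl / (wm * wk))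
        = -Complex.log (1 - C) / wj := by
      rw [hC]; field_simp
    have e4 : A⁻¹ * (wm / mβ * -(wj ^ 2)⁻¹) = -wj⁻¹ := by
      rw [hA]; field_simp
    have e5 : B⁻¹ * (wk / mα * -(wj ^ 2)⁻¹) = -wj⁻¹ := by
      rw [hB]; field_simp
    rw [e1, e2, e3, e4, e5, hD, ← hA, ← hB]
    field_simp
    ring
  · have hwd : wj * D = Complex.log (1 - A) + Complex.log (1 - B) - Complex.log (1 - C)
        - Complex.log A - Complex.log B := by
      rw [hD]; field_simp
    rw [hwd, Complex.exp_sub, Complex.exp_sub, Complex.exp_sub, Complex.exp_add,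
      Complex.exp_log h1A, Complex.exp_log h1B, Complex.exp_log h1C,
      Complex.exp_log hA0, Complex.exp_log hB0]
    have hden : wk * wm - wj * wl ≠ 0 := by
      intro h
      apply h1C
      rw [hC, sub_eq_zero]
      symm
      rw [div_eq_one_iff_eq (mul_ne_zero hwm hwk)]
      linear_combination -h
    have eA : 1 - A = (mβ * wj - wm) / (mβ * wj) := by
      rw [hA]; field_simp
    have eB : 1 - B = (mα * wj - wk) / (mα * wj) := by
      rw [hB]; field_simp
    have hABC : (1 - C) * (A * B) ≠ 0 := mul_ne_zero h1C (mul_ne_zero hA0 hB0)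
    rw [div_div, div_div, div_eq_div_iff hABC hden]
    rw [hA, hB, hC]
    field_simp
end

section
/- Let w_j, w_k, w_l, w_m, m_α, m_β be nonzero complex numbers and set E = w_l/(m_β·w_k), F = w_l/(m_α·w_m), C = (w_j·w_l)/(w_m·w_k). Assume ‖E‖ < 1, ‖F‖ < 1, ‖C‖ < 1. Define f : ℂ → ℂ by f(w) = Li₂(w_m/(m_β·w_j)) + Li₂(w_k/(m_α·w_j)) − Li₂(w/(m_β·w_k)) − Li₂(w/(m_α·w_m)) + Li₂((w_j·w)/(w_m·w_k)) − π²/6 + log(w_m/(m_β·w_j))·log(w_k/(m_α·w_j)). Then f has derivative D at w_l, where D = (1/w_l)·(log(1−E) + log(1−F) − log(1−C)), and moreover exp(w_l·D) = (((1/m_β)·w_l − w_k)·((1/m_α)·w_l − w_m))/(w_k·w_m − w_j·w_l). -/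
lemma li2_tsum_deriv {z : ℂ} (hz : ‖z‖ < 1) (hz0 : z ≠ 0) :
    ∑' n : ℕ, z ^ n / ((n : ℂ) + 1) = -Complex.log (1 - z) / z := by
  have h := Complex.hasSum_taylorSeries_neg_log hz
  have h1 : HasSum (fun n : ℕ => z ^ (n + 1) / ((n : ℕ) + 1 : ℂ))
      (-Complex.log (1 - z) - ∑ i ∈ Finset.range 1, z ^ i / (i : ℂ)) := by
    have := (hasSum_nat_add_iff' (f := fun n : ℕ => z ^ n / (n : ℂ)) 1).mpr h
    simpa using this
  simp only [Finset.range_one, Finset.sum_singleton, Nat.cast_zero, div_zero, sub_zero,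
    pow_zero] at h1
  have h2 : HasSum (fun n : ℕ => z ^ n / ((n : ℂ) + 1)) (-Complex.log (1 - z) / z) := by
    have h3 := h1.mul_left z⁻¹
    have heq : ∀ n : ℕ, z⁻¹ * (z ^ (n + 1) / ((n : ℕ) + 1 : ℂ)) = z ^ n / ((n : ℂ) + 1) := by
      intro n
      rw [pow_succ]
      field_simp
    simp only [heq] at h3
    rw [div_eq_inv_mul]
    exact h3
  exact h2.tsum_eq

lemma Li2_hasDerivAt_s4 {z : ℂ} (hz : ‖z‖ < 1) :
    HasDerivAt Li2 (∑' n : ℕ, z ^ n / ((n : ℂ) + 1)) z := by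
  set r : ℝ := (1 + ‖z‖) / 2 with hr
  have hz0 : 0 ≤ ‖z‖ := norm_nonneg z
  have hr0 : 0 ≤ r := by positivity
  have hr1 : r < 1 := by rw [hr]; linarith
  have hzr : ‖z‖ < r := by rw [hr]; linarith
  have key : ∀ (n : ℕ) (y : ℂ),
      HasDerivAt (fun w : ℂ => w ^ (n + 1) / ((n : ℂ) + 1) ^ 2) (y ^ n / ((n : ℂ) + 1)) y := by
    intro n y
    have h := (hasDerivAt_pow (n + 1) y).div_const (((n : ℂ) + 1) ^ 2)
    refine h.congr_deriv ?_
    have hn : ((n : ℂ) + 1) ≠ 0 := Nat.cast_add_one_ne_zero n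
    push_cast
    field_simp
  have := hasDerivAt_tsum_of_isPreconnected
    (u := fun n : ℕ => r ^ n)
    (g := fun (n : ℕ) (w : ℂ) => w ^ (n + 1) / ((n : ℂ) + 1) ^ 2)
    (g' := fun (n : ℕ) (y : ℂ) => y ^ n / ((n : ℂ) + 1))
    (summable_geometric_of_lt_one hr0 hr1)
    (Metric.isOpen_ball (x := (0 : ℂ)) (ε := r))
    ((convex_ball (0 : ℂ) r).isPreconnected)
    (fun n y _ => key n y)
    (fun n y hy => by
      rw [mem_ball_zero_iff] at hy
      have h1 : (1 : ℝ) ≤ ‖((n : ℂ) + 1)‖ := by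
        have : ((n : ℂ) + 1) = ((n + 1 : ℕ) : ℂ) := by push_cast; ring
        rw [this, Complex.norm_natCast]
        exact_mod_cast Nat.one_le_iff_ne_zero.mpr (Nat.succ_ne_zero n)
      calc ‖y ^ n / ((n : ℂ) + 1)‖ = ‖y‖ ^ n / ‖((n : ℂ) + 1)‖ := by
            rw [norm_div, norm_pow]
        _ ≤ ‖y‖ ^ n := by
            exact div_le_self (by positivity) h1
        _ ≤ r ^ n := pow_le_pow_left₀ (norm_nonneg y) hy.le n)
    (y₀ := z) (by rwa [mem_ball_zero_iff])
    (by
      apply Summable.of_norm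
      apply Summable.of_nonneg_of_le (fun n => norm_nonneg _)
        (fun n => ?_) (summable_geometric_of_lt_one hz0 hz)
      have h1 : (1 : ℝ) ≤ ‖(((n : ℂ) + 1)) ^ 2‖ := by
        rw [norm_pow]
        apply one_le_pow₀
        have : ((n : ℂ) + 1) = ((n + 1 : ℕ) : ℂ) := by push_cast; ring
        rw [this, Complex.norm_natCast]
        exact_mod_cast Nat.one_le_iff_ne_zero.mpr (Nat.succ_ne_zero n)
      calc ‖z ^ (n + 1) / ((n : ℂ) + 1) ^ 2‖ = ‖z‖ ^ (n + 1) / ‖(((n : ℂ) + 1)) ^ 2‖ := by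
            rw [norm_div, norm_pow]
        _ ≤ ‖z‖ ^ (n + 1) := div_le_self (by positivity) h1
        _ ≤ ‖z‖ ^ n := pow_le_pow_of_le_one hz0 hz.le (Nat.le_succ n))
    (by rwa [mem_ball_zero_iff])
  exact this

/-- The crossing potential of a positive crossing, viewed as a function of the
region variable `w_l`, has derivative `D` at `w_l`, and `exp (w_l * D) = τ_{c,l}`. -/
theorem crossing_potential_deriv_wl_pos
    (wj wk wl wm mα mβ : ℂ)
    (hwj : wj ≠ 0) (hwk : wk ≠ 0) (hwl : wl ≠ 0) (hwm : wm ≠ 0)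
    (hmα : mα ≠ 0) (hmβ : mβ ≠ 0)
    (E F C D : ℂ)
    (hE : E = wl / (mβ * wk)) (hF : F = wl / (mα * wm))
    (hC : C = (wj * wl) / (wm * wk))
    (hEnorm : ‖E‖ < 1) (hFnorm : ‖F‖ < 1) (hCnorm : ‖C‖ < 1)
    (hD : D = (1 / wl) * (Complex.log (1 - E) + Complex.log (1 - F) - Complex.log (1 - C))) :
    HasDerivAt (fun w : ℂ =>
      Li2 (wm / (mβ * wj)) + Li2 (wk / (mα * wj)) - Li2 (w / (mβ * wk)) - Li2 (w / (mα * wm))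
        + Li2 ((wj * w) / (wm * wk)) - (Real.pi : ℂ) ^ 2 / 6
        + Complex.log (wm / (mβ * wj)) * Complex.log (wk / (mα * wj))) D wl ∧
    Complex.exp (wl * D) =
      (((1 / mβ) * wl - wk) * ((1 / mα) * wl - wm)) / (wk * wm - wj * wl) := by
  have hmβwk : mβ * wk ≠ 0 := mul_ne_zero hmβ hwk
  have hmαwm : mα * wm ≠ 0 := mul_ne_zero hmα hwm
  have hwmwk : wm * wk ≠ 0 := mul_ne_zero hwm hwk
  have hE0 : E ≠ 0 := hE ▸ div_ne_zero hwl hmβwk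
  have hF0 : F ≠ 0 := hF ▸ div_ne_zero hwl hmαwm
  have hC0 : C ≠ 0 := hC ▸ div_ne_zero (mul_ne_zero hwj hwl) hwmwk
  have hE1 : (1 : ℂ) - E ≠ 0 := by
    intro h
    have : E = 1 := by linear_combination -h
    rw [this] at hEnorm; simp at hEnorm
  have hF1 : (1 : ℂ) - F ≠ 0 := by
    intro h
    have : F = 1 := by linear_combination -h
    rw [this] at hFnorm; simp at hFnorm
  have hC1 : (1 : ℂ) - C ≠ 0 := by
    intro h
    have : C = 1 := by linear_combination -h
    rw [this] at hCnorm; simp at hCnorm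
  constructor
  · -- derivative part
    have h3 : HasDerivAt (fun w : ℂ => Li2 (w / (mβ * wk)))
        (-Complex.log (1 - E) / E * (mβ * wk)⁻¹) wl := by
      have inner : HasDerivAt (fun w : ℂ => w / (mβ * wk)) ((mβ * wk)⁻¹) wl := by
        simpa using (hasDerivAt_id wl).div_const (mβ * wk)
      have outer := Li2_hasDerivAt_s4 (z := E) hEnorm
      rw [li2_tsum_deriv hEnorm hE0] at outer
      have := HasDerivAt.comp wl (hE ▸ outer) inner
      simpa [← hE, div_eq_mul_inv, Function.comp_def] using this
    have h4 : HasDerivAt (fun w : ℂ => Li2 (w / (mα * wm)))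
        (-Complex.log (1 - F) / F * (mα * wm)⁻¹) wl := by
      have inner : HasDerivAt (fun w : ℂ => w / (mα * wm)) ((mα * wm)⁻¹) wl := by
        simpa using (hasDerivAt_id wl).div_const (mα * wm)
      have outer := Li2_hasDerivAt_s4 (z := F) hFnorm
      rw [li2_tsum_deriv hFnorm hF0] at outer
      have := HasDerivAt.comp wl (hF ▸ outer) inner
      simpa [← hF, div_eq_mul_inv, Function.comp_def] using this
    have h5 : HasDerivAt (fun w : ℂ => Li2 ((wj * w) / (wm * wk)))
        (-Complex.log (1 - C) / C * (wj / (wm * wk))) wl := by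
      have inner : HasDerivAt (fun w : ℂ => (wj * w) / (wm * wk)) (wj / (wm * wk)) wl := by
        simpa [mul_div_assoc] using ((hasDerivAt_id wl).const_mul wj).div_const (wm * wk)
      have outer := Li2_hasDerivAt_s4 (z := C) hCnorm
      rw [li2_tsum_deriv hCnorm hC0] at outer
      have := HasDerivAt.comp wl (hC ▸ outer) inner
      simpa [← hC, Function.comp_def] using this
    have H := (((((hasDerivAt_const wl
        (Li2 (wm / (mβ * wj)) + Li2 (wk / (mα * wj)))).sub h3).sub h4).add h5).sub_const
        ((Real.pi : ℂ) ^ 2 / 6)).add_const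
        (Complex.log (wm / (mβ * wj)) * Complex.log (wk / (mα * wj)))
    refine H.congr_deriv ?_
    subst hD hE hF hC
    field_simp
    ring
  · -- exp part
    have hwlD : wl * D = Complex.log (1 - E) + Complex.log (1 - F) - Complex.log (1 - C) := by
      rw [hD]; field_simp
    rw [hwlD, sub_eq_add_neg, Complex.exp_add, Complex.exp_add, Complex.exp_neg,
      Complex.exp_log hE1, Complex.exp_log hF1, Complex.exp_log hC1]
    have hden : wk * wm - wj * wl ≠ 0 := by
      intro h
      apply hC1
      rw [hC, show wj * wl = wm * wk from by linear_combination -h, div_self hwmwk, sub_self]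
    rw [← div_eq_mul_inv, div_eq_div_iff hC1 hden, hE, hF, hC]
    field_simp
    ring
end

section
/- Let w_j, w_k, w_l, w_m, m_α, m_β be nonzero complex numbers and set A' = (m_β·w_m)/w_j, B' = (m_α·w_k)/w_j, C = (w_j·w_l)/(w_m·w_k). Assume ‖A'‖ < 1, ‖B'‖ < 1, ‖C‖ < 1, and that neither A' nor B' is a nonpositive real number. Define f : ℂ → ℂ by f(w) = −Li₂((m_β·w_m)/w) − Li₂((m_α·w_k)/w) + Li₂((m_β·w_l)/w_k) + Li₂((m_α·w_l)/w_m) − Li₂((w·w_l)/(w_m·w_k)) + π²/6 − log((m_β·w_m)/w)·log((m_α·w_k)/w). Then f has derivative D at w_j, where D = (1/w_j)·(−log(1−A') − log(1−B') + log(1−C) + log A' + log B'), and moreover exp(w_j·D) = (w_k·w_m − w_j·w_l)/(((1/m_α)·w_j − w_k)·((1/m_β)·w_j − w_m)). -/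
/-- The crossing potential of a negative crossing, viewed as a function of the
region variable `w_j`, has derivative `D` at `w_j`, and `exp (w_j * D) = τ_{c,j}`. -/
theorem crossing_potential_deriv_wj_neg
    (wj wk wl wm mα mβ : ℂ)
    (hwj : wj ≠ 0) (hwk : wk ≠ 0) (hwl : wl ≠ 0) (hwm : wm ≠ 0)
    (hmα : mα ≠ 0) (hmβ : mβ ≠ 0)
    (A' B' C D : ℂ)
    (hA : A' = (mβ * wm) / wj) (hB : B' = (mα * wk) / wj)
    (hC : C = (wj * wl) / (wm * wk))
    (hAnorm : ‖A'‖ < 1) (hBnorm : ‖B'‖ < 1) (hCnorm : ‖C‖ < 1)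
    (hAreal : ∀ r : ℝ, r ≤ 0 → (r : ℂ) ≠ A')
    (hBreal : ∀ r : ℝ, r ≤ 0 → (r : ℂ) ≠ B')
    (hD : D = (1 / wj) * (-Complex.log (1 - A') - Complex.log (1 - B') + Complex.log (1 - C)
      + Complex.log A' + Complex.log B')) :
    HasDerivAt (fun w : ℂ =>
      -Li2 ((mβ * wm) / w) - Li2 ((mα * wk) / w) + Li2 ((mβ * wl) / wk) + Li2 ((mα * wl) / wm)
        - Li2 ((w * wl) / (wm * wk)) + (Real.pi : ℂ) ^ 2 / 6
        - Complex.log ((mβ * wm) / w) * Complex.log ((mα * wk) / w)) D wj ∧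
    Complex.exp (wj * D) =
      (wk * wm - wj * wl) / (((1 / mα) * wj - wk) * ((1 / mβ) * wj - wm)) := by
  subst hD hA hB hC
  set A' : ℂ := mβ * wm / wj with hA
  set B' : ℂ := mα * wk / wj with hB
  set C : ℂ := wj * wl / (wm * wk) with hC
  have hA0 : A' ≠ 0 := fun h => hAreal 0 le_rfl (by simp [h])
  have hB0 : B' ≠ 0 := fun h => hBreal 0 le_rfl (by simp [h])
  have hC0 : C ≠ 0 := by
    rw [hC]
    exact div_ne_zero (mul_ne_zero hwj hwl) (mul_ne_zero hwm hwk)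
  have h1A : (1 : ℂ) - A' ≠ 0 := by
    intro h
    have : A' = 1 := by linear_combination -h
    rw [this] at hAnorm; simp at hAnorm
  have h1B : (1 : ℂ) - B' ≠ 0 := by
    intro h
    have : B' = 1 := by linear_combination -h
    rw [this] at hBnorm; simp at hBnorm
  have h1C : (1 : ℂ) - C ≠ 0 := by
    intro h
    have : C = 1 := by linear_combination -h
    rw [this] at hCnorm; simp at hCnorm
  have hAslit : A' ∈ Complex.slitPlane := by
    rw [Complex.mem_slitPlane_iff]
    by_contra h
    push_neg at h
    obtain ⟨h1, h2⟩ := h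
    exact hAreal A'.re h1 (by exact_mod_cast (Complex.ext (by simp) (by simp [h2])))
  have hBslit : B' ∈ Complex.slitPlane := by
    rw [Complex.mem_slitPlane_iff]
    by_contra h
    push_neg at h
    obtain ⟨h1, h2⟩ := h
    exact hBreal B'.re h1 (by exact_mod_cast (Complex.ext (by simp) (by simp [h2])))
  -- inner derivatives
  have hinnA : HasDerivAt (fun w : ℂ => (mβ * wm) / w) (-(mβ * wm) / wj ^ 2) wj := by
    have h := (hasDerivAt_const wj (mβ * wm)).div (hasDerivAt_id wj) hwj
    refine h.congr_deriv ?_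
    simp only [id, zero_mul, zero_sub, mul_one]
  have hinnB : HasDerivAt (fun w : ℂ => (mα * wk) / w) (-(mα * wk) / wj ^ 2) wj := by
    have h := (hasDerivAt_const wj (mα * wk)).div (hasDerivAt_id wj) hwj
    refine h.congr_deriv ?_
    simp only [id, zero_mul, zero_sub, mul_one]
  have hinnC : HasDerivAt (fun w : ℂ => (w * wl) / (wm * wk)) (wl / (wm * wk)) wj := by
    have h := ((hasDerivAt_id wj).mul_const wl).div_const (wm * wk)
    simpa using h
  -- composite derivatives
  have hLi2A : HasDerivAt (fun w : ℂ => Li2 ((mβ * wm) / w))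
      ((-Complex.log (1 - A') / A') * (-(mβ * wm) / wj ^ 2)) wj :=
    by have := (Li2_hasDerivAt hAnorm hA0).comp wj hinnA; exact this
  have hLi2B : HasDerivAt (fun w : ℂ => Li2 ((mα * wk) / w))
      ((-Complex.log (1 - B') / B') * (-(mα * wk) / wj ^ 2)) wj :=
    by have := (Li2_hasDerivAt hBnorm hB0).comp wj hinnB; exact this
  have hLi2C : HasDerivAt (fun w : ℂ => Li2 ((w * wl) / (wm * wk)))
      ((-Complex.log (1 - C) / C) * (wl / (wm * wk))) wj :=
    by have := (Li2_hasDerivAt hCnorm hC0).comp wj hinnC; exact this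
  have hlogA : HasDerivAt (fun w : ℂ => Complex.log ((mβ * wm) / w))
      (A'⁻¹ * (-(mβ * wm) / wj ^ 2)) wj :=
    by have := (Complex.hasDerivAt_log hAslit).comp wj hinnA; exact this
  have hlogB : HasDerivAt (fun w : ℂ => Complex.log ((mα * wk) / w))
      (B'⁻¹ * (-(mα * wk) / wj ^ 2)) wj :=
    by have := (Complex.hasDerivAt_log hBslit).comp wj hinnB; exact this
  have h1Awj : wj - mβ * wm ≠ 0 := by
    intro h
    apply h1A
    rw [hA]
    field_simp
    linear_combination h
  have h1Bwj : wj - mα * wk ≠ 0 := by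
    intro h
    apply h1B
    rw [hB]
    field_simp
    linear_combination h
  have e1 : -Complex.log (1 - A') / A' * (-(mβ * wm) / wj ^ 2)
      = Complex.log (1 - A') / wj := by
    rw [hA]; field_simp
  have e2 : -Complex.log (1 - B') / B' * (-(mα * wk) / wj ^ 2)
      = Complex.log (1 - B') / wj := by
    rw [hB]; field_simp
  have e3 : -Complex.log (1 - C) / C * (wl / (wm * wk))
      = -Complex.log (1 - C) / wj := by
    rw [hC]; field_simp
  have e4 : A'⁻¹ * (-(mβ * wm) / wj ^ 2) = -(1 / wj) := by
    rw [hA]; field_simp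
  have e5 : B'⁻¹ * (-(mα * wk) / wj ^ 2) = -(1 / wj) := by
    rw [hB]; field_simp
  constructor
  · have hbig := (((((hLi2A.neg.sub hLi2B).add_const (Li2 ((mβ * wl) / wk))).add_const
      (Li2 ((mα * wl) / wm))).sub hLi2C).add_const ((Real.pi : ℂ) ^ 2 / 6)).sub
      (hlogA.mul hlogB)
    refine hbig.congr_deriv ?_
    rw [e1, e2, e3, e4, e5]
    field_simp
    ring
  · rw [show wj * ((1 / wj) * (-Complex.log (1 - A') - Complex.log (1 - B')
        + Complex.log (1 - C) + Complex.log A' + Complex.log B')) =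
        (-Complex.log (1 - A')) + (-Complex.log (1 - B')) + Complex.log (1 - C)
        + Complex.log A' + Complex.log B' by field_simp; ring]
    rw [Complex.exp_add, Complex.exp_add, Complex.exp_add, Complex.exp_add,
      Complex.exp_neg, Complex.exp_neg, Complex.exp_log h1A, Complex.exp_log h1B,
      Complex.exp_log h1C, Complex.exp_log hA0, Complex.exp_log hB0]
    have h5 : (1 / mα) * wj - wk ≠ 0 := by
      intro h
      apply h1Bwj
      field_simp at h
      linear_combination h
    have h6 : (1 / mβ) * wj - wm ≠ 0 := by
      intro h
      apply h1Awj
      field_simp at h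
      linear_combination h
    have f1 : (1 : ℂ) - A' = (wj - mβ * wm) / wj := by
      rw [hA]; field_simp
    have f2 : (1 : ℂ) - B' = (wj - mα * wk) / wj := by
      rw [hB]; field_simp
    have f3 : (1 : ℂ) - C = (wm * wk - wj * wl) / (wm * wk) := by
      rw [hC]; field_simp
    have f5 : (1 / mα) * wj - wk = (wj - mα * wk) / mα := by
      field_simp
    have f6 : (1 / mβ) * wj - wm = (wj - mβ * wm) / mβ := by
      field_simp
    rw [f1, f2, f3, f5, f6, hA, hB]
    rw [inv_div, inv_div]
    simp only [div_mul_div_comm]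
    rw [div_eq_div_iff]
    · field_simp
    · apply_rules [mul_ne_zero] <;> assumption
    · exact div_ne_zero (mul_ne_zero h1Bwj h1Awj) (mul_ne_zero hmα hmβ)
end

section
/- Let w_j, w_k, w_l, w_m, m_α, m_β be nonzero complex numbers and set A' = (m_β·w_m)/w_j, B' = (m_α·w_k)/w_j, F' = (m_α·w_l)/w_m, C = (w_j·w_l)/(w_m·w_k). Assume ‖A'‖ < 1, ‖F'‖ < 1, ‖C‖ < 1, and that neither A' nor B' is a nonpositive real number. Define f : ℂ → ℂ by f(w) = −Li₂((m_β·w)/w_j) − Li₂((m_α·w_k)/w_j) + Li₂((m_β·w_l)/w_k) + Li₂((m_α·w_l)/w) − Li₂((w_j·w_l)/(w·w_k)) + π²/6 − log((m_β·w)/w_j)·log((m_α·w_k)/w_j). Then f has derivative D at w_m, where D = (1/w_m)·(log(1−A') + log(1−F') − log(1−C) − log B'), and moreover exp(w_m·D) = ((m_β·w_m − w_j)·((1/m_α)·w_m − w_l))/(w_j·w_l − w_k·w_m). -/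
/-- The crossing potential of a negative crossing, viewed as a function of the
region variable `w_m`, has derivative `D` at `w_m`, and `exp (w_m * D) = τ_{c,m}`. -/
theorem crossing_potential_deriv_wm_neg
    (wj wk wl wm mα mβ : ℂ)
    (hwj : wj ≠ 0) (hwk : wk ≠ 0) (hwl : wl ≠ 0) (hwm : wm ≠ 0)
    (hmα : mα ≠ 0) (hmβ : mβ ≠ 0)
    (A' B' F' C D : ℂ)
    (hA : A' = (mβ * wm) / wj) (hB : B' = (mα * wk) / wj)
    (hF : F' = (mα * wl) / wm) (hC : C = (wj * wl) / (wm * wk))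
    (hAnorm : ‖A'‖ < 1) (hFnorm : ‖F'‖ < 1) (hCnorm : ‖C‖ < 1)
    (hAreal : ∀ r : ℝ, r ≤ 0 → (r : ℂ) ≠ A')
    (hBreal : ∀ r : ℝ, r ≤ 0 → (r : ℂ) ≠ B')
    (hD : D = (1 / wm) * (Complex.log (1 - A') + Complex.log (1 - F') - Complex.log (1 - C)
      - Complex.log B')) :
    HasDerivAt (fun w : ℂ =>
      -Li2 ((mβ * w) / wj) - Li2 ((mα * wk) / wj) + Li2 ((mβ * wl) / wk) + Li2 ((mα * wl) / w)
        - Li2 ((wj * wl) / (w * wk)) + (Real.pi : ℂ) ^ 2 / 6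
        - Complex.log ((mβ * w) / wj) * Complex.log ((mα * wk) / wj)) D wm ∧
    Complex.exp (wm * D) =
      ((mβ * wm - wj) * ((1 / mα) * wm - wl)) / (wj * wl - wk * wm) := by
  have hA0 : A' ≠ 0 := by rw [hA]; exact div_ne_zero (mul_ne_zero hmβ hwm) hwj
  have hB0 : B' ≠ 0 := by rw [hB]; exact div_ne_zero (mul_ne_zero hmα hwk) hwj
  have hF0 : F' ≠ 0 := by rw [hF]; exact div_ne_zero (mul_ne_zero hmα hwl) hwm
  have hC0 : C ≠ 0 := by rw [hC]; exact div_ne_zero (mul_ne_zero hwj hwl) (mul_ne_zero hwm hwk)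
  have h1A : (1 : ℂ) - A' ≠ 0 := by
    intro h; rw [sub_eq_zero] at h; rw [← h] at hAnorm; simp at hAnorm
  have h1F : (1 : ℂ) - F' ≠ 0 := by
    intro h; rw [sub_eq_zero] at h; rw [← h] at hFnorm; simp at hFnorm
  have h1C : (1 : ℂ) - C ≠ 0 := by
    intro h; rw [sub_eq_zero] at h; rw [← h] at hCnorm; simp at hCnorm
  have hAslit : A' ∈ Complex.slitPlane := by
    rw [Complex.mem_slitPlane_iff]
    by_contra h
    push_neg at h
    exact hAreal A'.re h.1 (Complex.ext (by simp) (by simp [h.2]))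
  -- raw forms
  have hAnorm' : ‖(mβ * wm) / wj‖ < 1 := hA ▸ hAnorm
  have hA0' : (mβ * wm) / wj ≠ 0 := hA ▸ hA0
  have hAslit' : (mβ * wm) / wj ∈ Complex.slitPlane := hA ▸ hAslit
  have hFnorm' : ‖(mα * wl) / wm‖ < 1 := hF ▸ hFnorm
  have hF0' : (mα * wl) / wm ≠ 0 := hF ▸ hF0
  have hCnorm' : ‖(wj * wl) / (wm * wk)‖ < 1 := hC ▸ hCnorm
  have hC0' : (wj * wl) / (wm * wk) ≠ 0 := hC ▸ hC0
  -- inner derivatives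
  have h1 : HasDerivAt (fun w : ℂ => (mβ * w) / wj) (mβ * 1 / wj) wm :=
    ((hasDerivAt_id wm).const_mul mβ).div_const wj
  have h2 : HasDerivAt (fun w : ℂ => (mα * wl) / w)
      ((0 * wm - mα * wl * 1) / wm ^ 2) wm :=
    (hasDerivAt_const wm (mα * wl)).div (hasDerivAt_id wm) hwm
  have h3 : HasDerivAt (fun w : ℂ => (wj * wl) / (w * wk))
      ((0 * (wm * wk) - wj * wl * (1 * wk)) / (wm * wk) ^ 2) wm :=
    (hasDerivAt_const wm (wj * wl)).div ((hasDerivAt_id wm).mul_const wk)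
      (mul_ne_zero hwm hwk)
  -- composed derivatives
  have P1 : HasDerivAt (fun w : ℂ => Li2 ((mβ * w) / wj))
      (-Complex.log (1 - (mβ * wm) / wj) / ((mβ * wm) / wj) * (mβ * 1 / wj)) wm :=
    by have := (Li2_hasDerivAt hAnorm' hA0').comp wm h1; exact this
  have P4 : HasDerivAt (fun w : ℂ => Li2 ((mα * wl) / w))
      (-Complex.log (1 - (mα * wl) / wm) / ((mα * wl) / wm)
        * ((0 * wm - mα * wl * 1) / wm ^ 2)) wm :=
    (Li2_hasDerivAt hFnorm' hF0').comp wm h2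
  have P5 : HasDerivAt (fun w : ℂ => Li2 ((wj * wl) / (w * wk)))
      (-Complex.log (1 - (wj * wl) / (wm * wk)) / ((wj * wl) / (wm * wk))
        * ((0 * (wm * wk) - wj * wl * (1 * wk)) / (wm * wk) ^ 2)) wm :=
    by have := (Li2_hasDerivAt hCnorm' hC0').comp wm h3; exact this
  have P6 : HasDerivAt (fun w : ℂ => Complex.log ((mβ * w) / wj)
      * Complex.log ((mα * wk) / wj))
      ((mβ * 1 / wj / ((mβ * wm) / wj)) * Complex.log ((mα * wk) / wj)) wm :=
    (h1.clog hAslit').mul_const _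
  have HD := (((((P1.neg.sub_const (Li2 ((mα * wk) / wj))).add_const
      (Li2 ((mβ * wl) / wk))).add P4).sub P5).add_const ((Real.pi : ℂ) ^ 2 / 6)).sub P6
  have e1 : -Complex.log (1 - (mβ * wm) / wj) / ((mβ * wm) / wj) * (mβ * 1 / wj)
      = -((1 / wm) * Complex.log (1 - (mβ * wm) / wj)) := by
    field_simp
  have e2 : -Complex.log (1 - (mα * wl) / wm) / ((mα * wl) / wm)
      * ((0 * wm - mα * wl * 1) / wm ^ 2)
      = (1 / wm) * Complex.log (1 - (mα * wl) / wm) := by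
    field_simp
    ring
  have e3 : -Complex.log (1 - (wj * wl) / (wm * wk)) / ((wj * wl) / (wm * wk))
      * ((0 * (wm * wk) - wj * wl * (1 * wk)) / (wm * wk) ^ 2)
      = (1 / wm) * Complex.log (1 - (wj * wl) / (wm * wk)) := by
    field_simp
    ring
  have e4 : mβ * 1 / wj / ((mβ * wm) / wj) * Complex.log ((mα * wk) / wj)
      = (1 / wm) * Complex.log ((mα * wk) / wj) := by
    field_simp
  rw [e1, e2, e3, e4] at HD
  constructor
  · convert HD using 1
    · rfl
    · rfl
    · rfl
    rw [hD, hA, hB, hF, hC]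
    ring
  · have hwmD : wm * D = Complex.log (1 - A') + Complex.log (1 - F') - Complex.log (1 - C)
        - Complex.log B' := by
      rw [hD]; field_simp
    have hden : wj * wl - wk * wm ≠ 0 := by
      intro h
      apply h1C
      rw [hC]
      field_simp
      linear_combination -h
    have hexp : Complex.exp (wm * D) = (1 - A') * (1 - F') / ((1 - C) * B') := by
      rw [hwmD, sub_eq_add_neg, sub_eq_add_neg, Complex.exp_add, Complex.exp_add,
        Complex.exp_add, Complex.exp_neg, Complex.exp_neg,
        Complex.exp_log h1A, Complex.exp_log h1F, Complex.exp_log h1C, Complex.exp_log hB0]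
      rw [div_eq_mul_inv, mul_inv]
      ring
    rw [hexp, div_eq_div_iff (mul_ne_zero h1C hB0) hden, hA, hB, hF, hC]
    field_simp
    ring
end
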